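/- Let X be a real normed space, fix real numbers α, η, β with 1 < α < η < β and a constant C > 0, and let N, A, B : X → ℝ satisfy C⁻¹‖u‖^η ≤ N(u) ≤ C‖u‖^η, |A(u)| ≤ C‖u‖^α and |B(u)| ≤ C‖u‖^β for all u ∈ X. Then there exists ε > 0, depending only on α, η, β and C, such that for every u ∈ X with A(u) > 0 and B(u) > 0 one has c(u) ≤ −ε, where c(u) = −((η−α)(β−η)/(ηβα)) · ((η−α)/(β−α))^{η/(β−η)} · N(u)^{β/(β−η)}/B(u)^{η/(β−η)}. In particular the extremal value c* = sup{c(u) : A(u) > 0, B(u) > 0} is negative whenever this set is nonempty. -/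

import Mathlib

/-- Under the growth conditions `C⁻¹‖u‖^η ≤ N(u) ≤ C‖u‖^η`,
`|A(u)| ≤ C‖u‖^α`, `|B(u)| ≤ C‖u‖^β` (`1 < α < η < β`), the extremal value
functional `c(u)` is bounded above by `−ε` on `{A > 0} ∩ {B > 0}` for some
`ε > 0` depending only on `α, η, β, C`; in particular its supremum `c*` is
negative whenever this set is nonempty. -/
theorem stmt4 {X : Type*} [NormedAddCommGroup X] [NormedSpace ℝ X]
    (α η β C : ℝ) (h1 : 1 < α) (h2 : α < η) (h3 : η < β) (hC : 0 < C)
    (N A B : X → ℝ)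
    (hNlow : ∀ u : X, C⁻¹ * ‖u‖ ^ η ≤ N u) (hNup : ∀ u : X, N u ≤ C * ‖u‖ ^ η)
    (hA : ∀ u : X, |A u| ≤ C * ‖u‖ ^ α)
    (hB : ∀ u : X, |B u| ≤ C * ‖u‖ ^ β) :
    ∃ ε : ℝ, 0 < ε ∧
      (∀ u : X, 0 < A u → 0 < B u →
        -((η - α) * (β - η) / (η * β * α)) * ((η - α) / (β - α)) ^ (η / (β - η)) *
            ((N u) ^ (β / (β - η)) / (B u) ^ (η / (β - η))) ≤ -ε) ∧
      ((∃ u : X, 0 < A u ∧ 0 < B u) →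
        sSup {x : ℝ | ∃ u : X, 0 < A u ∧ 0 < B u ∧
          x = -((η - α) * (β - η) / (η * β * α)) * ((η - α) / (β - α)) ^ (η / (β - η)) *
                ((N u) ^ (β / (β - η)) / (B u) ^ (η / (β - η)))} < 0) := by
  have ht : 0 < β - η := by linarith
  have hηα : 0 < η - α := by linarith
  have hβα : 0 < β - α := by linarith
  have hα : 0 < α := by linarith
  have hη : 0 < η := by linarith
  have hβ : 0 < β := by linarith
  set p := β / (β - η) with hp
  set q := η / (β - η) with hq
  have hppos : 0 < p := by positivity
  have hqpos : 0 < q := by positivity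
  set K := ((η - α) * (β - η) / (η * β * α)) * ((η - α) / (β - α)) ^ q with hK
  have hKpos : 0 < K := by
    apply mul_pos
    · positivity
    · exact Real.rpow_pos_of_pos (by positivity) _
  set ε := K * C ^ (-((β + η) / (β - η))) with hε
  have hεpos : 0 < ε := mul_pos hKpos (Real.rpow_pos_of_pos hC _)
  have main : ∀ u : X, 0 < A u → 0 < B u →
      -((η - α) * (β - η) / (η * β * α)) * ((η - α) / (β - α)) ^ q *
        ((N u) ^ p / (B u) ^ q) ≤ -ε := by
    intro u hAu hBu
    have hu : 0 < ‖u‖ := by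
      by_contra h
      push_neg at h
      have hn : ‖u‖ = 0 := le_antisymm h (norm_nonneg u)
      have h1' := (abs_le.mp (hA u)).2
      rw [hn, Real.zero_rpow hα.ne', mul_zero] at h1'
      linarith
    have hNpos : 0 < N u := lt_of_lt_of_le (by positivity) (hNlow u)
    have hNp : (C⁻¹ * ‖u‖ ^ η) ^ p ≤ (N u) ^ p :=
      Real.rpow_le_rpow (by positivity) (hNlow u) hppos.le
    have hBq : (B u) ^ q ≤ (C * ‖u‖ ^ β) ^ q :=
      Real.rpow_le_rpow hBu.le (le_trans (le_abs_self _) (hB u)) hqpos.le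
    have h2 : (C⁻¹ * ‖u‖ ^ η) ^ p / (C * ‖u‖ ^ β) ^ q ≤ (N u) ^ p / (B u) ^ q :=
      div_le_div₀ (Real.rpow_nonneg hNpos.le p) hNp (Real.rpow_pos_of_pos hBu q) hBq
    have e : (C⁻¹ * ‖u‖ ^ η) ^ p / (C * ‖u‖ ^ β) ^ q = C ^ (-((β + η) / (β - η))) := by
      rw [Real.mul_rpow (by positivity) (by positivity),
          Real.mul_rpow hC.le (by positivity),
          ← Real.rpow_mul (norm_nonneg u), ← Real.rpow_mul (norm_nonneg u),
          Real.inv_rpow hC.le, ← Real.rpow_neg hC.le]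
      have hE : η * p = β * q := by rw [hp, hq]; field_simp
      rw [hE, mul_div_mul_right _ _ (Real.rpow_pos_of_pos hu (β * q)).ne',
          ← Real.rpow_sub hC]
      congr 1
      rw [hp, hq]; ring
    rw [e] at h2
    have h4 : K * C ^ (-((β + η) / (β - η))) ≤ K * (N u ^ p / B u ^ q) :=
      mul_le_mul_of_nonneg_left h2 hKpos.le
    calc -((η - α) * (β - η) / (η * β * α)) * ((η - α) / (β - α)) ^ q *
          ((N u) ^ p / (B u) ^ q)
        = -(K * (N u ^ p / B u ^ q)) := by rw [hK]; ring
      _ ≤ -ε := by rw [hε]; linarith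
  refine ⟨ε, hεpos, main, ?_⟩
  rintro ⟨u, hAu, hBu⟩
  have hle : sSup {x : ℝ | ∃ u : X, 0 < A u ∧ 0 < B u ∧
      x = -((η - α) * (β - η) / (η * β * α)) * ((η - α) / (β - α)) ^ q *
            ((N u) ^ p / (B u) ^ q)} ≤ -ε := by
    refine csSup_le ⟨_, ⟨u, hAu, hBu, rfl⟩⟩ ?_
    rintro x ⟨v, hAv, hBv, rfl⟩
    exact main v hAv hBv
  linarith
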